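/- With α(x) = c/(1−x) and β(x) = b − α(x) for scalars b, c ∈ F, the identity α(x/y)²α(y) + β(x/y)α(x)β(y/x) = α(y)²α(x/y) + β(y)α(x)β(1/y) holds as rational functions in x and y. -/

import Mathlib

set_option maxHeartbeats 2000000

lemma ratfunc_X_ne_one (K : Type*) [CommRing K] [IsDomain K] [Nontrivial K] :
    (RatFunc.X : RatFunc K) ≠ 1 := by
  intro h
  have h' : algebraMap (Polynomial K) (RatFunc K) Polynomial.X
      = algebraMap (Polynomial K) (RatFunc K) 1 := by
    simpa [RatFunc.algebraMap_X] using h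
  have h2 := RatFunc.algebraMap_injective K h'
  have h3 := congrArg (fun p => Polynomial.coeff p 1) h2
  simp only [Polynomial.coeff_X_one, Polynomial.coeff_one] at h3
  simp at h3

lemma ratfunc_C_ne_X (K : Type*) [CommRing K] [IsDomain K] (r : K) :
    (RatFunc.C r : RatFunc K) ≠ RatFunc.X := by
  intro h
  have h' : algebraMap (Polynomial K) (RatFunc K) (Polynomial.C r)
      = algebraMap (Polynomial K) (RatFunc K) Polynomial.X := by
    simpa [RatFunc.algebraMap_C, RatFunc.algebraMap_X] using h
  have h2 := RatFunc.algebraMap_injective K h'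
  have h3 := congrArg (fun p => Polynomial.coeff p 1) h2
  simp only [Polynomial.coeff_X_one, Polynomial.coeff_one] at h3
  simp at h3

/-- For α(x) = c/(1−x) and β(x) = b − c/(1−x), the identity
α(x/y)²α(y) + β(x/y)α(x)β(y/x) = α(y)²α(x/y) + β(y)α(x)β(1/y) holds in F(x,y). -/
theorem second_ybe_identity (F : Type*) [Field F] (b c : F) :
    let x : RatFunc (RatFunc F) := RatFunc.C RatFunc.X
    let y : RatFunc (RatFunc F) := RatFunc.X
    let A : RatFunc (RatFunc F) → RatFunc (RatFunc F) :=
      fun t => RatFunc.C (RatFunc.C c) / (1 - t)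
    let B : RatFunc (RatFunc F) → RatFunc (RatFunc F) :=
      fun t => RatFunc.C (RatFunc.C b) - RatFunc.C (RatFunc.C c) / (1 - t)
    (A (x / y)) ^ 2 * A y + B (x / y) * A x * B (y / x) =
      (A y) ^ 2 * A (x / y) + B y * A x * B (1 / y) := by
  intro x y A B
  have hx : x ≠ 0 := by simp [x, RatFunc.X_ne_zero]
  have hy : y ≠ 0 := RatFunc.X_ne_zero
  have hxy : x - y ≠ 0 := sub_ne_zero.mpr (ratfunc_C_ne_X _ _)
  have h1x : (1 : RatFunc (RatFunc F)) - x ≠ 0 := by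
    rw [sub_ne_zero]
    intro h
    have h' : (RatFunc.C RatFunc.X : RatFunc (RatFunc F)) = RatFunc.C 1 := by
      simpa using h.symm
    have h2 : algebraMap (Polynomial (RatFunc F)) (RatFunc (RatFunc F)) (Polynomial.C RatFunc.X)
        = algebraMap (Polynomial (RatFunc F)) (RatFunc (RatFunc F)) (Polynomial.C 1) := by
      simpa [RatFunc.algebraMap_C] using h'
    have h3 := RatFunc.algebraMap_injective _ h2
    have h4 : (RatFunc.X : RatFunc F) = 1 := Polynomial.C_injective h3
    exact ratfunc_X_ne_one F h4
  have h1y : (1 : RatFunc (RatFunc F)) - y ≠ 0 :=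
    sub_ne_zero.mpr fun h => ratfunc_X_ne_one (RatFunc F) h.symm
  have hyx : y - x ≠ 0 := fun h => hxy (by linear_combination -h)
  have e1 : (1 : RatFunc (RatFunc F)) - x / y = (y - x) / y := by field_simp
  have e2 : (1 : RatFunc (RatFunc F)) - y / x = (x - y) / x := by field_simp
  have e3 : (1 : RatFunc (RatFunc F)) - y⁻¹ = (y - 1) / y := by field_simp
  have h1y' : y - 1 ≠ 0 := fun h => h1y (by linear_combination -h)
  simp only [A, B, one_div, e1, e2, e3, div_div_eq_mul_div, div_div_div_cancel_right]
  field_simp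
  ring
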